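/- Let f ∈ ℚ(x) be a rational function that is a ℚ-linear combination of a constant and functions of the form x·u'(x)/u(x) with u ∈ ℚ[x], u(0) = 1. Then the Taylor coefficients a_n of f at 0 satisfy: for all but finitely many primes p, a_n ∈ ℤ_p for all n, and a_{mp^r} ≡ a_{mp^{r-1}} (mod p^r) for all m ≥ 1 and r ≥ 1. -/

import Mathlib

open PowerSeries
noncomputable section
section Pexp
variable {R : Type*} [CommRing R]

def mulEmb (p : ℕ) (hp : 0 < p) : ℕ × ℕ ↪ ℕ × ℕ :=
  ⟨fun ab => (p * ab.1, p * ab.2), by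
    intro a b hab
    simp only [Prod.ext_iff] at hab ⊢
    exact ⟨Nat.eq_of_mul_eq_mul_left hp hab.1, Nat.eq_of_mul_eq_mul_left hp hab.2⟩⟩

@[simp] theorem mulEmb_apply (p : ℕ) (hp : 0 < p) (ab : ℕ × ℕ) :
    mulEmb p hp ab = (p * ab.1, p * ab.2) := rfl

/-- expansion: substitute X ↦ X^p in a power series. -/
def pexp (p : ℕ) (hp : 0 < p) : PowerSeries R →+* PowerSeries R where
  toFun f := PowerSeries.mk fun n => if p ∣ n then PowerSeries.coeff (n / p) f else 0
  map_one' := by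
    ext n
    simp only [coeff_mk, coeff_one]
    rcases eq_or_ne n 0 with rfl | hn
    · simp
    · rw [if_neg hn]
      split_ifs with h1 h2
      · obtain ⟨k, rfl⟩ := h1
        rw [Nat.mul_div_cancel_left _ hp] at h2
        simp [h2] at hn
      · rfl
      · rfl
  map_mul' f g := by
    ext n
    simp only [coeff_mk, PowerSeries.coeff_mul]
    by_cases hn : p ∣ n
    · obtain ⟨m, rfl⟩ := hn
      rw [if_pos ⟨m, rfl⟩, Nat.mul_div_cancel_left _ hp]
      have step1 : ∑ x ∈ Finset.HasAntidiagonal.antidiagonal (p * m),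
          ((if p ∣ x.1 then PowerSeries.coeff (x.1 / p) f else 0) *
            (if p ∣ x.2 then PowerSeries.coeff (x.2 / p) g else 0)) =
          ∑ x ∈ (Finset.HasAntidiagonal.antidiagonal m).map (mulEmb p hp),
          ((if p ∣ x.1 then PowerSeries.coeff (x.1 / p) f else 0) *
            (if p ∣ x.2 then PowerSeries.coeff (x.2 / p) g else 0)) := by
        symm
        apply Finset.sum_subset
        · intro x hx
          simp only [Finset.mem_map, Finset.HasAntidiagonal.mem_antidiagonal, mulEmb_apply] at hx
          obtain ⟨⟨x1, y1⟩, hxy, h⟩ := hx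
          rw [Finset.HasAntidiagonal.mem_antidiagonal, ← h]
          simp only
          rw [← Nat.mul_add, hxy]
        · rintro ⟨a, b⟩ hab hnotin
          rw [Finset.HasAntidiagonal.mem_antidiagonal] at hab
          split_ifs with h1 h2
          · obtain ⟨a', rfl⟩ := h1
            obtain ⟨b', rfl⟩ := h2
            exfalso
            apply hnotin
            simp only [Finset.mem_map, Finset.HasAntidiagonal.mem_antidiagonal, mulEmb_apply]
            have : a' + b' = m := Nat.eq_of_mul_eq_mul_left hp (by rw [Nat.mul_add]; exact hab)
            exact ⟨(a', b'), this, rfl⟩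
          all_goals simp
      rw [step1, Finset.sum_map]
      apply Finset.sum_congr rfl
      rintro ⟨a, b⟩ hab
      simp only [mulEmb_apply, if_pos (Dvd.intro _ rfl), Nat.mul_div_cancel_left _ hp]
    · rw [if_neg hn]
      symm
      apply Finset.sum_eq_zero
      rintro ⟨a, b⟩ hab
      rw [Finset.HasAntidiagonal.mem_antidiagonal] at hab
      split_ifs with h1 h2
      · exact absurd (hab ▸ Nat.dvd_add h1 h2) hn
      all_goals simp
  map_zero' := by ext n; simp
  map_add' f g := by ext n; simp only [coeff_mk, map_add]; split_ifs <;> simp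

theorem coeff_pexp (p : ℕ) (hp : 0 < p) (f : PowerSeries R) (n : ℕ) :
    PowerSeries.coeff n (pexp p hp f) =
      if p ∣ n then PowerSeries.coeff (n / p) f else 0 := by
  simp only [pexp, RingHom.coe_mk, MonoidHom.coe_mk, OneHom.coe_mk, coeff_mk]

theorem pexp_coe (p : ℕ) (hp : 0 < p) (q : Polynomial R) :
    pexp p hp (q : PowerSeries R) = ((Polynomial.expand R p q : Polynomial R) : PowerSeries R) := by
  ext n
  simp only [coeff_pexp, Polynomial.coeff_coe, Polynomial.coeff_expand hp]

end Pexp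
section Padic
variable {p : ℕ} [hp : Fact p.Prime]

theorem isUnit_natCast_padic (k : ℕ) (hk : ¬ p ∣ k) : IsUnit (k : ℤ_[p]) := by
  rw [PadicInt.isUnit_iff]
  refine le_antisymm (PadicInt.norm_le_one _) ?_
  by_contra hlt
  push_neg at hlt
  have : ‖((k : ℤ) : ℤ_[p])‖ < 1 := by push_cast; exact hlt
  rw [PadicInt.norm_int_lt_one_iff_dvd] at this
  exact hk (Int.ofNat_dvd.mp this)

theorem natCast_dvd_pow_pred (k : ℕ) (hk : 1 ≤ k) : (k : ℤ_[p]) ∣ (p : ℤ_[p]) ^ (k - 1) := by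
  set v := padicValNat p k with hv
  have hpv : p ^ v ∣ k := pow_padicValNat_dvd
  have hvk : v ≤ k - 1 := by
    by_contra hvk
    push_neg at hvk
    have h1 : p ^ k ≤ p ^ v := Nat.pow_le_pow_right hp.out.pos (by omega)
    have h2 : p ^ v ≤ k := Nat.le_of_dvd hk hpv
    have h3 : k < 2 ^ k := Nat.lt_two_pow_self
    have h4 : (2:ℕ) ^ k ≤ p ^ k := Nat.pow_le_pow_left hp.out.two_le k
    omega
  obtain ⟨t, ht⟩ := hpv
  have htnd : ¬ p ∣ t := by
    intro ⟨t', ht'⟩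
    rw [ht', ← mul_assoc, ← pow_succ] at ht
    exact pow_succ_padicValNat_not_dvd (by omega : k ≠ 0) ⟨t', ht⟩
  obtain ⟨u, hu⟩ := isUnit_natCast_padic t htnd
  refine ⟨(↑u⁻¹ : ℤ_[p]) * (p : ℤ_[p]) ^ (k - 1 - v), ?_⟩
  have hcast : (k : ℤ_[p]) = (p : ℤ_[p]) ^ v * (t : ℤ_[p]) := by
    rw [← Nat.cast_pow, ← Nat.cast_mul, ← ht]
  have huu : (↑u : ℤ_[p]) * ↑u⁻¹ = 1 := u.mul_inv
  calc (p : ℤ_[p]) ^ (k-1) = (p : ℤ_[p]) ^ v * (p : ℤ_[p]) ^ (k-1-v) := by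
        rw [← pow_add]; congr 1; omega
    _ = ((p : ℤ_[p]) ^ v * ↑u) * ((↑u⁻¹ : ℤ_[p]) * (p : ℤ_[p]) ^ (k-1-v)) := by
        rw [show ((p : ℤ_[p]) ^ v * ↑u) * ((↑u⁻¹ : ℤ_[p]) * (p : ℤ_[p]) ^ (k-1-v))
          = ((↑u : ℤ_[p]) * ↑u⁻¹) * ((p : ℤ_[p]) ^ v * (p : ℤ_[p]) ^ (k-1-v)) from by ring,
          huu, one_mul]
    _ = (k : ℤ_[p]) * ((↑u⁻¹ : ℤ_[p]) * (p : ℤ_[p]) ^ (k-1-v)) := by rw [hcast, hu]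

theorem frob_coeff_dvd (v : Polynomial ℤ_[p]) (n : ℕ) :
    (p : ℤ_[p]) ∣ (Polynomial.expand ℤ_[p] p v - v ^ p).coeff n := by
  have hfr : frobenius (ZMod p) p = RingHom.id _ := by
    ext x; simp [frobenius_def, ZMod.pow_card]
  have h : (Polynomial.expand ℤ_[p] p v - v ^ p).map (PadicInt.toZMod) = 0 := by
    rw [Polynomial.map_sub, Polynomial.map_expand, Polynomial.map_pow, sub_eq_zero]
    have h2 := Polynomial.map_frobenius_expand p (v.map (PadicInt.toZMod))
    rwa [hfr, Polynomial.map_id] at h2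
  have h3 : PadicInt.toZMod ((Polynomial.expand ℤ_[p] p v - v ^ p).coeff n) = 0 := by
    have := congrArg (fun q => Polynomial.coeff q n) h
    simpa only [Polynomial.coeff_map, Polynomial.coeff_zero] using this
  rwa [← RingHom.mem_ker, PadicInt.ker_toZMod, PadicInt.maximalIdeal_eq_span_p,
    Ideal.mem_span_singleton] at h3

theorem padic_norm_le_one_of_not_dvd_den (q : ℚ) (h : ¬ p ∣ q.den) : ‖(q : ℚ_[p])‖ ≤ 1 := by
  rcases eq_or_ne q 0 with rfl | hq
  · simp
  rw [Padic.eq_padicNorm, padicNorm.eq_zpow_of_nonzero hq]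
  have hval : 0 ≤ padicValRat p q := by
    unfold padicValRat
    rw [padicValNat.eq_zero_of_not_dvd h]
    simp [padicValInt]
  push_cast
  apply zpow_le_one_of_nonpos₀
  · exact_mod_cast hp.out.one_le
  · omega

theorem val_ge_of_norm_le (q : ℚ) (hq : q ≠ 0) (r : ℤ)
    (h : ‖(q : ℚ_[p])‖ ≤ (p : ℝ) ^ (-r)) : r ≤ padicValRat p q := by
  rw [Padic.eq_padicNorm, padicNorm.eq_zpow_of_nonzero hq] at h
  have hp1 : (1 : ℝ) < (p : ℝ) := by exact_mod_cast hp.out.one_lt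
  have : ((p:ℝ) ^ (-padicValRat p q) : ℝ) ≤ (p : ℝ) ^ (-r) := by
    push_cast at h ⊢
    exact h
  rw [zpow_le_zpow_iff_right₀ hp1] at this
  omega

end Padic
section Core
variable {p : ℕ} [hp : Fact p.Prime]

theorem gauss_core (v : Polynomial ℤ_[p]) (hv : v.coeff 0 = 1) (m r : ℕ) (hm : 1 ≤ m) (hr : 1 ≤ r) :
    ∃ z : ℤ_[p],
      (PowerSeries.coeff (m * p ^ r - 1))
          (((Polynomial.derivative v : Polynomial ℤ_[p]) : PowerSeries ℤ_[p]) *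
            PowerSeries.invOfUnit (v : PowerSeries ℤ_[p]) 1) -
        (PowerSeries.coeff (m * p ^ (r - 1) - 1))
          (((Polynomial.derivative v : Polynomial ℤ_[p]) : PowerSeries ℤ_[p]) *
            PowerSeries.invOfUnit (v : PowerSeries ℤ_[p]) 1) = (p : ℤ_[p]) ^ r * z := by
  have hp0 : 0 < p := hp.out.pos
  set A : PowerSeries ℤ_[p] := (v : PowerSeries ℤ_[p]) with hAdef
  have hA : PowerSeries.constantCoeff A = 1 := by
    rw [hAdef, Polynomial.constantCoeff_coe, hv]
  set V := PowerSeries.invOfUnit A 1 with hVdef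
  have hAV : A * V = 1 := PowerSeries.mul_invOfUnit A 1 (by rw [hA, Units.val_one])
  set DA : PowerSeries ℤ_[p] := ((Polynomial.derivative v : Polynomial ℤ_[p]) : PowerSeries ℤ_[p])
    with hDAdef
  set G := DA * V with hGdef
  set B := pexp p hp0 A with hBdef
  have hBcoe : B = ((Polynomial.expand ℤ_[p] p v : Polynomial ℤ_[p]) : PowerSeries ℤ_[p]) :=
    pexp_coe p hp0 v
  have hB : PowerSeries.constantCoeff B = 1 := by
    rw [hBcoe, Polynomial.constantCoeff_coe, Polynomial.coeff_expand hp0]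
    simpa using hv
  set VB := PowerSeries.invOfUnit B 1 with hVBdef
  have hBVB : B * VB = 1 := PowerSeries.mul_invOfUnit B 1 (by rw [hB, Units.val_one])
  have hpexpV : pexp p hp0 V = VB := by
    have h1 : B * pexp p hp0 V = 1 := by
      rw [hBdef, ← map_mul, hAV, map_one]
    calc pexp p hp0 V = pexp p hp0 V * (B * VB) := by rw [hBVB, mul_one]
      _ = (B * pexp p hp0 V) * VB := by ring
      _ = VB := by rw [h1, one_mul]
  -- Frobenius
  have hdvd : ∀ n : ℕ, (p : ℤ_[p]) ∣ PowerSeries.coeff n (B - A ^ p) := by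
    intro n
    have hc : B - A ^ p =
        ((Polynomial.expand ℤ_[p] p v - v ^ p : Polynomial ℤ_[p]) : PowerSeries ℤ_[p]) := by
      rw [Polynomial.coe_sub, Polynomial.coe_pow, hBcoe, hAdef]
    rw [hc, Polynomial.coeff_coe]
    exact frob_coeff_dvd v n
  set W : PowerSeries ℤ_[p] := PowerSeries.mk fun n => (hdvd n).choose with hWdef
  set Pi : PowerSeries ℤ_[p] := ((p : ℕ) : PowerSeries ℤ_[p]) with hPidef
  have hPiC : PowerSeries.C ((p : ℕ) : ℤ_[p]) = Pi := map_natCast PowerSeries.C p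
  have hW : Pi * W = B - A ^ p := by
    ext n
    rw [← hPiC, PowerSeries.coeff_C_mul, hWdef, PowerSeries.coeff_mk]
    exact ((hdvd n).choose_spec).symm
  have hpR : ((p : ℕ) : ℤ_[p]) ≠ 0 := Nat.cast_ne_zero.mpr hp.out.ne_zero
  have hPine : Pi ≠ 0 := by
    intro h
    apply hpR
    have h2 := congrArg PowerSeries.constantCoeff h
    rwa [hPidef, map_natCast, map_zero] at h2
  have hW0 : PowerSeries.constantCoeff W = 0 := by
    have hApc : PowerSeries.constantCoeff (A ^ p) = 1 := by rw [map_pow, hA, one_pow]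
    have h0 : ((p:ℕ):ℤ_[p]) * PowerSeries.constantCoeff W = 0 := by
      have h := congrArg PowerSeries.constantCoeff hW
      rw [map_mul, map_sub, hB, hApc, sub_self] at h
      rwa [show PowerSeries.constantCoeff Pi = ((p:ℕ):ℤ_[p]) by simp [hPidef]] at h
    exact (mul_eq_zero.mp h0).resolve_left hpR
  -- derivative helpers
  have dprod : ∀ f g : PowerSeries ℤ_[p],
      d⁄dX ℤ_[p] (f * g) = f * d⁄dX ℤ_[p] g + g * d⁄dX ℤ_[p] f := fun f g => by
    rw [Derivation.leibniz, smul_eq_mul, smul_eq_mul]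
  have dpow : ∀ (f : PowerSeries ℤ_[p]) (k : ℕ),
      d⁄dX ℤ_[p] (f ^ k) = ((k:ℕ) : PowerSeries ℤ_[p]) * (f ^ (k-1) * d⁄dX ℤ_[p] f) :=
    fun f k => by rw [Derivation.leibniz_pow, smul_eq_mul, nsmul_eq_mul]
  have hDA' : d⁄dX ℤ_[p] A = DA := by rw [hAdef, PowerSeries.derivative_coe, hDAdef]
  have hADV : A * d⁄dX ℤ_[p] V = -(V * DA) := by
    have h := dprod A V
    rw [hAV, Derivation.map_one_eq_zero, hDA'] at h
    linear_combination -h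
  have hDV : d⁄dX ℤ_[p] V = -(DA * V^2) := by
    have h2 : (A * V) * d⁄dX ℤ_[p] V = V * (A * d⁄dX ℤ_[p] V) := by ring
    rw [hAV, one_mul, hADV] at h2
    linear_combination h2
  set DW := d⁄dX ℤ_[p] W with hDWdef
  set DAB : PowerSeries ℤ_[p] :=
    ((Polynomial.expand ℤ_[p] p (Polynomial.derivative v) : Polynomial ℤ_[p]) :
      PowerSeries ℤ_[p]) with hDABdef
  have hnatcoe : (((p:ℕ) : Polynomial ℤ_[p]) : PowerSeries ℤ_[p]) = Pi := by
    rw [← Polynomial.C_eq_natCast, Polynomial.coe_C, hPiC]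
  have hDB : d⁄dX ℤ_[p] B = DAB * (Pi * X^(p-1)) := by
    rw [hBcoe, PowerSeries.derivative_coe, Polynomial.derivative_expand, Polynomial.coe_mul,
      Polynomial.coe_mul, Polynomial.coe_pow, Polynomial.coe_X, hnatcoe, hDABdef]
  have hB' : B = A ^ p + Pi * W := by linear_combination -hW
  have hDPi : d⁄dX ℤ_[p] Pi = 0 := by rw [← hPiC, PowerSeries.derivative_C]
  have hDB2 : d⁄dX ℤ_[p] B = Pi * (A^(p-1) * DA) + Pi * DW := by
    rw [hB', map_add, dpow A p, dprod Pi W, hDPi, hDA', hDWdef, hPidef]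
    ring
  have hcancel : X^(p-1) * DAB = A^(p-1) * DA + DW := by
    apply mul_left_cancel₀ hPine
    have h := hDB.symm.trans hDB2
    linear_combination h
  set w := W * V ^ p with hwdef
  have hw0 : PowerSeries.constantCoeff w = 0 := by rw [hwdef, map_mul, hW0, zero_mul]
  have hXw : (X : PowerSeries ℤ_[p]) ∣ w := PowerSeries.X_dvd_iff.mpr hw0
  have h1 : A ^ p * V ^ p = 1 := by rw [← mul_pow, hAV, one_pow]
  have hE : B * V ^ p = 1 + Pi * w := by
    rw [hwdef]; linear_combination (-(V^p)) * hW + h1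
  have hunit : (1 + Pi * w) * (A ^ p * VB) = 1 := by
    rw [← hE]
    calc B * V^p * (A^p * VB) = (B * VB) * (A^p * V^p) := by ring
      _ = 1 := by rw [hBVB, h1, mul_one]
  set T := -(A ^ p * VB) with hTdef
  have hVp1 : V^(p-1) * V^2 = V^(p+1) := by rw [← pow_add]; congr 1; omega
  have hDw : d⁄dX ℤ_[p] w = DW * V^p - Pi * (W * (DA * V^(p+1))) := by
    rw [hwdef, dprod, dpow V p, hDV, hDWdef]
    rw [hPidef]
    linear_combination (-(((p:ℕ) : PowerSeries ℤ_[p]) * W * DA)) * hVp1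
  -- structural identity (C2)
  have hApow : A ^ p = A^(p-1) * A := by
    have h := pow_succ A (p-1)
    rwa [show p - 1 + 1 = p by omega] at h
  have hVpow : V ^ p = V^(p-1) * V := by
    have h := pow_succ V (p-1)
    rwa [show p - 1 + 1 = p by omega] at h
  have hVp1' : V^(p+1) = V^(p-1) * V * V := by
    have h2v := pow_succ V p
    rw [h2v, hVpow]
  have h1' : A^(p-1) * V^(p-1) = 1 := by rw [← mul_pow, hAV, one_pow]
  have hBVB' : (A^(p-1) * A + Pi * W) * VB = 1 := by rw [← hApow, ← hB']; exact hBVB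
  set S := (X^(p-1) * DAB) * VB with hSdef
  have hC2 : G - S = d⁄dX ℤ_[p] w * T := by
    have e : G - S = -(DW * VB) + Pi * (W * (DA * (V * VB))) := by
      rw [hSdef, hcancel, hGdef]
      linear_combination (-(DA*V)) * hBVB' + (A^(p-1) * DA * VB) * hAV
    have step1 : d⁄dX ℤ_[p] w * T = -(DW * VB) + Pi * (W * (DA * (V * VB))) := by
      rw [hDw, hTdef, hVpow, hVp1', hApow]
      linear_combination ((-(DW*VB) + Pi*(W*(DA*(V*VB)))) * (V*A)) * h1'
        + (-(DW*VB) + Pi*(W*(DA*(V*VB)))) * hAV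
    rw [e, step1]
  -- the integral coefficients d_k
  have hdc : ∀ k : ℕ, ∃ c : ℤ_[p], ((k+1 : ℕ) : ℤ_[p]) * c = (-1)^(k+1) * (p:ℤ_[p])^k := by
    intro k
    obtain ⟨c, hc⟩ := natCast_dvd_pow_pred (p := p) (k+1) (by omega)
    have hc' : (p:ℤ_[p])^k = ((k+1:ℕ):ℤ_[p]) * c := by simpa using hc
    exact ⟨(-1)^(k+1) * c, by linear_combination ((-1:ℤ_[p])^k) * hc'⟩
  choose dc hdcspec using hdc
  set H := PowerSeries.mk
    (fun N => ∑ k ∈ Finset.range N, dc k * PowerSeries.coeff N (w^(k+1))) with hHdef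
  -- C1 : coefficientwise, d/dX H = dw * T
  have hC1 : ∀ n : ℕ, PowerSeries.coeff n (d⁄dX ℤ_[p] H)
      = PowerSeries.coeff n (d⁄dX ℤ_[p] w * T) := by
    intro n
    set Pn := ∑ j ∈ Finset.range (n+1), (-(Pi*w))^j with hPndef
    have hgeom : Pn * (-(Pi*w) - 1) = (-(Pi*w))^(n+1) - 1 := geom_sum_mul _ _
    have hTP : T + Pn = -((A^p*VB) * (-(Pi*w))^(n+1)) := by
      rw [hTdef]
      linear_combination (-(A^p*VB)) * hgeom + (-(Pn)) * hunit
    have hXdvd : (X : PowerSeries ℤ_[p])^(n+1) ∣ d⁄dX ℤ_[p] w * (T + Pn) := by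
      rw [hTP]
      have h1x : (X : PowerSeries ℤ_[p]) ∣ -(Pi*w) := dvd_neg.mpr (hXw.mul_left Pi)
      have h2x : (X : PowerSeries ℤ_[p])^(n+1) ∣ (-(Pi*w))^(n+1) := pow_dvd_pow_of_dvd h1x _
      exact Dvd.dvd.mul_left (dvd_neg.mpr (Dvd.dvd.mul_left h2x _)) _
    have hcoeff0 : PowerSeries.coeff n (d⁄dX ℤ_[p] w * (T + Pn)) = 0 :=
      PowerSeries.X_pow_dvd_iff.mp hXdvd n (lt_add_one n)
    have hsplit : d⁄dX ℤ_[p] w * T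
        = d⁄dX ℤ_[p] w * (-Pn) + d⁄dX ℤ_[p] w * (T + Pn) := by ring
    rw [hsplit, map_add, hcoeff0, add_zero, PowerSeries.coeff_derivative, hHdef,
      PowerSeries.coeff_mk, hPndef, mul_neg, map_neg, Finset.mul_sum, map_sum,
      Finset.sum_mul, ← Finset.sum_neg_distrib]
    apply Finset.sum_congr rfl
    intro k _
    have hk1 : ((k+1:ℕ):ℤ_[p]) ≠ 0 := Nat.cast_ne_zero.mpr (Nat.succ_ne_zero k)
    apply mul_left_cancel₀ hk1
    have hpowk : (-(Pi*w))^k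
        = PowerSeries.C ((-1)^k * ((p:ℕ):ℤ_[p])^k) * w^k := by
      calc (-(Pi*w))^k = (-Pi)^k * w^k := by rw [show -(Pi*w) = (-Pi)*w by ring, mul_pow]
        _ = _ := by rw [neg_pow, map_mul, map_pow, map_pow, map_neg, map_one, hPiC]
    have key : ((k+1:ℕ):ℤ_[p]) * PowerSeries.coeff n (w^k * d⁄dX ℤ_[p] w)
        = PowerSeries.coeff (n+1) (w^(k+1)) * ((n:ℤ_[p]) + 1) := by
      have hkey := PowerSeries.coeff_derivative (w^(k+1)) n
      rw [dpow w (k+1), Nat.add_sub_cancel,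
        show ((k+1:ℕ) : PowerSeries ℤ_[p]) = PowerSeries.C ((k+1:ℕ):ℤ_[p])
          from (map_natCast _ _).symm, PowerSeries.coeff_C_mul] at hkey
      exact_mod_cast hkey
    have hre : d⁄dX ℤ_[p] w * (-(Pi*w))^k
        = PowerSeries.C ((-1)^k * ((p:ℕ):ℤ_[p])^k) * (w^k * d⁄dX ℤ_[p] w) := by
      rw [hpowk]; ring
    rw [hre, PowerSeries.coeff_C_mul]
    linear_combination (PowerSeries.coeff (n+1) (w^(k+1)) * ((n:ℤ_[p]) + 1)) * hdcspec k
      + ((-1:ℤ_[p])^k * ((p:ℕ):ℤ_[p])^k) * key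
  -- final assembly
  set N1 := m * p ^ r with hN1
  set N2 := m * p ^ (r-1) with hN2
  have hN12 : N1 = p * N2 := by
    have hpr : p ^ r = p^(r-1) * p := by
      have h := pow_succ p (r-1)
      rwa [show r - 1 + 1 = r by omega] at h
    rw [hN1, hN2, hpr]; ring
  have hN2pos : 1 ≤ N2 := by
    have := Nat.mul_pos (by omega : 0 < m) (Nat.pow_pos (n := r-1) hp0)
    omega
  set k0 := N2 - 1 with hk0
  have hN2k : N2 = k0 + 1 := by omega
  have hN1k : N1 = p * k0 + p := by rw [hN12, hN2k]; ring
  have hpN1 : p ≤ N1 := by omega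
  have hSc : PowerSeries.coeff (N1 - 1) S = PowerSeries.coeff (N2 - 1) G := by
    have hSpexp : S = X^(p-1) * (pexp p hp0 G) := by
      conv_rhs => rw [hGdef, map_mul, hpexpV, hDAdef, pexp_coe]
      rw [hSdef, hDABdef, mul_assoc]
    rw [hSpexp, show N1 - 1 = (N1 - p) + (p - 1) by omega, PowerSeries.coeff_X_pow_mul,
      coeff_pexp]
    have hN1p : N1 - p = p * k0 := by omega
    rw [hN1p, if_pos ⟨k0, rfl⟩, Nat.mul_div_cancel_left _ hp0, ← hk0]
  have hGS : PowerSeries.coeff (N1-1) G - PowerSeries.coeff (N1-1) S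
      = PowerSeries.coeff ((N1-1)+1) H * (((N1-1 : ℕ):ℤ_[p]) + 1) := by
    have hc := congrArg (PowerSeries.coeff (N1-1)) hC2
    rw [map_sub] at hc
    rw [hc, ← hC1 (N1-1), PowerSeries.coeff_derivative]
  refine ⟨(m:ℤ_[p]) * PowerSeries.coeff N1 H, ?_⟩
  rw [hSc] at hGS
  have hN1' : (N1 - 1) + 1 = N1 := by omega
  have hcast : (((N1 - 1 : ℕ)):ℤ_[p]) + 1 = (N1 : ℤ_[p]) := by
    rw [show ((N1 - 1 : ℕ):ℤ_[p]) + 1 = (((N1 - 1) + 1 : ℕ) : ℤ_[p]) by push_cast; ring, hN1']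
  rw [hN1', hcast] at hGS
  rw [hGS, hN1]
  push_cast
  ring
end Core
section Bridge
variable {p : ℕ} [hp : Fact p.Prime]

theorem ps_eq_inv {K : Type*} [Field K] (a b : PowerSeries K)
    (ha : PowerSeries.constantCoeff a ≠ 0) (h : a * b = 1) : b = a⁻¹ := by
  have h2 : a⁻¹ * (a * b) = a⁻¹ := by rw [h, mul_one]
  rwa [← mul_assoc, PowerSeries.inv_mul_cancel a ha, one_mul] at h2

theorem coe_map_ps {R S : Type*} [CommRing R] [CommRing S] (f : R →+* S) (q : Polynomial R) :
    PowerSeries.map f (q : PowerSeries R) = ((q.map f : Polynomial S) : PowerSeries S) := by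
  ext n
  simp [PowerSeries.coeff_map, Polynomial.coeff_coe]

theorem exists_lift_padic (q : Polynomial ℚ_[p]) (h : ∀ n, ‖q.coeff n‖ ≤ 1) :
    ∃ w : Polynomial ℤ_[p], w.map (PadicInt.Coe.ringHom) = q := by
  refine ⟨∑ n ∈ q.support, Polynomial.monomial n (⟨q.coeff n, h n⟩ : ℤ_[p]), ?_⟩
  rw [Polynomial.map_sum]
  conv_rhs => rw [q.as_sum_support]
  apply Finset.sum_congr rfl
  intro n _
  refine (Polynomial.map_monomial _).trans ?_
  rfl

theorem ratfunc_term_coe (P Q : Polynomial ℚ) (hQ : Q.coeff 0 ≠ 0) :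
    ((algebraMap (Polynomial ℚ) (RatFunc ℚ) P / algebraMap (Polynomial ℚ) (RatFunc ℚ) Q :
        RatFunc ℚ) : LaurentSeries ℚ)
      = HahnSeries.ofPowerSeries ℤ ℚ ((P : PowerSeries ℚ) * (Q : PowerSeries ℚ)⁻¹) := by
  have hQ0 : PowerSeries.constantCoeff (Q : PowerSeries ℚ) ≠ 0 := by
    rwa [Polynomial.constantCoeff_coe]
  have hQps : (Q : PowerSeries ℚ) ≠ 0 := fun h => hQ0 (by rw [h, map_zero])
  have hQLS : (HahnSeries.ofPowerSeries ℤ ℚ (Q : PowerSeries ℚ)) ≠ 0 := by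
    intro h
    rw [← map_zero (HahnSeries.ofPowerSeries ℤ ℚ)] at h
    exact hQps (HahnSeries.ofPowerSeries_injective h)
  rw [map_div₀,
    show algebraMap (Polynomial ℚ) (RatFunc ℚ) P = (P : RatFunc ℚ) from rfl,
    show algebraMap (Polynomial ℚ) (RatFunc ℚ) Q = (Q : RatFunc ℚ) from rfl,
    ← RatFunc.coe_coe, ← RatFunc.coe_coe,
    show ((P : PowerSeries ℚ) : LaurentSeries ℚ)
      = HahnSeries.ofPowerSeries ℤ ℚ (P : PowerSeries ℚ) from rfl,
    show ((Q : PowerSeries ℚ) : LaurentSeries ℚ)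
      = HahnSeries.ofPowerSeries ℤ ℚ (Q : PowerSeries ℚ) from rfl,
    div_eq_iff hQLS, ← map_mul]
  congr 1
  rw [mul_assoc, PowerSeries.inv_mul_cancel _ hQ0, mul_one]

theorem map_inv_ps (ψ : ℚ →+* ℚ_[p]) (Q : Polynomial ℚ) (hQ : Q.coeff 0 ≠ 0) :
    PowerSeries.map ψ ((Q : PowerSeries ℚ)⁻¹)
      = ((Q.map ψ : Polynomial ℚ_[p]) : PowerSeries ℚ_[p])⁻¹ := by
  have hQ0 : PowerSeries.constantCoeff (Q : PowerSeries ℚ) ≠ 0 := by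
    rwa [Polynomial.constantCoeff_coe]
  have hQ0' : PowerSeries.constantCoeff ((Q.map ψ : Polynomial ℚ_[p]) : PowerSeries ℚ_[p]) ≠ 0 := by
    rw [Polynomial.constantCoeff_coe, Polynomial.coeff_map]
    intro h
    apply hQ0
    rw [Polynomial.constantCoeff_coe]
    exact ψ.injective (by rw [h, map_zero])
  apply ps_eq_inv _ _ hQ0'
  rw [← coe_map_ps, ← map_mul, PowerSeries.mul_inv_cancel _ hQ0, map_one]

end Bridge
end
open Polynomial

/-- The Taylor coefficients of `f` at `0` (as Laurent series coefficients). -/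
noncomputable def taylorCoeff (f : RatFunc ℚ) (n : ℤ) : ℚ :=
  ((f : LaurentSeries ℚ)).coeff n

/-- `a` satisfies the Gauss congruences for `p`: all coefficients are `p`-adically
integral and `a_{mp^r} ≡ a_{mp^{r-1}} (mod p^r)`. -/
def SatisfiesGauss (p : ℕ) (a : ℤ → ℚ) : Prop :=
  (∀ n : ℤ, a n ≠ 0 → 0 ≤ padicValRat p (a n)) ∧
  ∀ m r : ℕ, 1 ≤ m → 1 ≤ r →
    (a (m * p ^ r) = a (m * p ^ (r - 1)) ∨
      (r : ℤ) ≤ padicValRat p (a (m * p ^ r) - a (m * p ^ (r - 1))))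

/-- If `f ∈ ℚ(x)` is a `ℚ`-linear combination of a constant and functions
`x·u'(x)/u(x)` with `u ∈ ℚ[x]`, `u(0) = 1`, then the Taylor coefficients of `f`
satisfy the Gauss congruences for all but finitely many primes. -/
theorem minton_if_direction (f : RatFunc ℚ) (ι : Type) (s : Finset ι)
    (c0 : ℚ) (c : ι → ℚ) (u : ι → Polynomial ℚ) (hu : ∀ i ∈ s, (u i).eval 0 = 1)
    (hf : f = RatFunc.C c0 + ∑ i ∈ s, RatFunc.C (c i) *
      (RatFunc.X * algebraMap (Polynomial ℚ) (RatFunc ℚ) (derivative (u i)) /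
        algebraMap (Polynomial ℚ) (RatFunc ℚ) (u i))) :
    {p : ℕ | p.Prime ∧ ¬ SatisfiesGauss p (taylorCoeff f)}.Finite := by
  classical
  set Qset : Finset ℚ :=
    ({c0} ∪ s.image c ∪ s.biUnion fun i => (u i).support.image fun k => (u i).coeff k)
    with hQs
  have hfin : (⋃ q ∈ (Qset : Set ℚ), {t : ℕ | t ∣ q.den}).Finite := by
    apply Set.Finite.biUnion Qset.finite_toSet
    intro q _
    exact (Set.finite_Iic q.den).subset fun t ht => Nat.le_of_dvd q.pos ht
  apply hfin.subset
  rintro p ⟨hprime, hnot⟩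
  by_contra hnotin
  apply hnot
  have hgood : ∀ q ∈ Qset, ¬ (p ∣ q.den) := by
    intro q hq hd
    exact hnotin (Set.mem_biUnion hq hd)
  haveI : Fact p.Prime := ⟨hprime⟩
  set ψ : ℚ →+* ℚ_[p] := Rat.castHom ℚ_[p] with hψ
  have hnorm : ∀ q ∈ Qset, ‖ψ q‖ ≤ 1 := fun q hq =>
    padic_norm_le_one_of_not_dvd_den q (hgood q hq)
  have hnc0 : ‖ψ c0‖ ≤ 1 := hnorm c0 (by
    rw [hQs]
    exact Finset.mem_union_left _ (Finset.mem_union_left _ (Finset.mem_singleton_self c0)))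
  have hnc : ∀ i ∈ s, ‖ψ (c i)‖ ≤ 1 := fun i hi => hnorm _ (by
    rw [hQs]
    exact Finset.mem_union_left _ (Finset.mem_union_right _ (Finset.mem_image_of_mem c hi)))
  have hnu : ∀ i ∈ s, ∀ k, ‖((u i).map ψ).coeff k‖ ≤ 1 := by
    intro i hi k
    rw [Polynomial.coeff_map]
    by_cases hk : (u i).coeff k = 0
    · simp [hk]
    · apply hnorm
      rw [hQs]
      exact Finset.mem_union_right _ (Finset.mem_biUnion.mpr
        ⟨i, hi, Finset.mem_image_of_mem _ (Polynomial.mem_support_iff.mpr hk)⟩)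
  have hex : ∀ i, ∃ w : Polynomial ℤ_[p], i ∈ s → w.map PadicInt.Coe.ringHom = (u i).map ψ := by
    intro i
    by_cases hi : i ∈ s
    · obtain ⟨w, hw⟩ := exists_lift_padic ((u i).map ψ) (hnu i hi)
      exact ⟨w, fun _ => hw⟩
    · exact ⟨1, fun h => absurd h hi⟩
  choose vp hvp using hex
  have hcoeinj : Function.Injective (PadicInt.Coe.ringHom (p := p)) := Subtype.coe_injective
  have hu0 : ∀ i ∈ s, (u i).coeff 0 = 1 := by
    intro i hi; rw [Polynomial.coeff_zero_eq_eval_zero]; exact hu i hi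
  have hvp0 : ∀ i ∈ s, (vp i).coeff 0 = 1 := by
    intro i hi
    apply hcoeinj
    have h2 := congrArg (fun q => Polynomial.coeff q 0) (hvp i hi)
    simp only [Polynomial.coeff_map] at h2
    rw [h2, hu0 i hi, map_one, map_one]
  set chat : ι → ℤ_[p] := fun i => if h : i ∈ s then ⟨ψ (c i), hnc i h⟩ else 0 with hchat
  have hchats : ∀ i ∈ s, (PadicInt.Coe.ringHom (chat i)) = ψ (c i) := by
    intro i hi; rw [hchat]; exact (congrArg PadicInt.Coe.ringHom (dif_pos hi :
      (if h : i ∈ s then (⟨ψ (c i), hnc i h⟩ : ℤ_[p]) else (0 : ℤ_[p])) = ⟨ψ (c i), hnc i hi⟩)).trans rfl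
  set chat0 : ℤ_[p] := ⟨ψ c0, hnc0⟩ with hchat0
  set PP : ι → Polynomial ℚ := fun i => Polynomial.C (c i) * Polynomial.X * derivative (u i)
    with hPP
  set F : PowerSeries ℚ := ((Polynomial.C c0 : Polynomial ℚ) : PowerSeries ℚ)
    + ∑ i ∈ s, ((PP i : Polynomial ℚ) : PowerSeries ℚ)
      * ((u i : Polynomial ℚ) : PowerSeries ℚ)⁻¹ with hF
  have hT0 : (f : LaurentSeries ℚ) = HahnSeries.ofPowerSeries ℤ ℚ F := by
    rw [hf, map_add, map_sum, hF, map_add, map_sum]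
    congr 1
    · rw [Polynomial.coe_C,
        HahnSeries.ofPowerSeries_C]
      simp
    · apply Finset.sum_congr rfl
      intro i hi
      have hterm : RatFunc.C (c i) * (RatFunc.X * algebraMap _ (RatFunc ℚ) (derivative (u i)) /
          algebraMap _ _ (u i)) = algebraMap _ (RatFunc ℚ) (PP i) / algebraMap _ _ (u i) := by
        rw [hPP]
        simp only [map_mul, RatFunc.algebraMap_C, RatFunc.algebraMap_X]
        rw [mul_div_assoc', ← mul_assoc]
      rw [hterm]
      exact ratfunc_term_coe (PP i) (u i) (by rw [hu0 i hi]; exact one_ne_zero)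
  have hTay : ∀ n : ℤ, taylorCoeff f n
      = if n < 0 then 0 else PowerSeries.coeff n.natAbs F := by
    intro n
    show ((f : LaurentSeries ℚ)).coeff n = _
    rw [hT0]
    exact PowerSeries.coeff_coe F n
  set coeR : ℤ_[p] →+* ℚ_[p] := PadicInt.Coe.ringHom with hcoeR
  set gX : ι → PowerSeries ℤ_[p] := fun i =>
    (X : PowerSeries ℤ_[p]) * (((derivative (vp i) : Polynomial ℤ_[p]) : PowerSeries ℤ_[p]) *
      PowerSeries.invOfUnit ((vp i : Polynomial ℤ_[p]) : PowerSeries ℤ_[p]) 1) with hgX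
  have hterm2 : ∀ i ∈ s, PowerSeries.map ψ (((PP i : Polynomial ℚ) : PowerSeries ℚ)
      * ((u i : Polynomial ℚ) : PowerSeries ℚ)⁻¹)
      = PowerSeries.map coeR (PowerSeries.C (chat i) * gX i) := by
    intro i hi
    have hui0 : (u i).coeff 0 ≠ 0 := by rw [hu0 i hi]; exact one_ne_zero
    have hinv : PowerSeries.map coeR
        (PowerSeries.invOfUnit ((vp i : Polynomial ℤ_[p]) : PowerSeries ℤ_[p]) 1)
        = (((u i).map ψ : Polynomial ℚ_[p]) : PowerSeries ℚ_[p])⁻¹ := by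
      apply ps_eq_inv
      · rw [Polynomial.constantCoeff_coe, Polynomial.coeff_map]
        intro hcon
        exact hui0 (ψ.injective (by rw [hcon, map_zero]))
      · have hmulinv : ((vp i : Polynomial ℤ_[p]) : PowerSeries ℤ_[p]) *
            PowerSeries.invOfUnit ((vp i : Polynomial ℤ_[p]) : PowerSeries ℤ_[p]) 1 = 1 :=
          PowerSeries.mul_invOfUnit _ _
            (by rw [Polynomial.constantCoeff_coe, hvp0 i hi, Units.val_one])
        calc (((u i).map ψ : Polynomial ℚ_[p]) : PowerSeries ℚ_[p]) *
            PowerSeries.map coeR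
              (PowerSeries.invOfUnit ((vp i : Polynomial ℤ_[p]) : PowerSeries ℤ_[p]) 1)
            = PowerSeries.map coeR (((vp i : Polynomial ℤ_[p]) : PowerSeries ℤ_[p]) *
              PowerSeries.invOfUnit ((vp i : Polynomial ℤ_[p]) : PowerSeries ℤ_[p]) 1) := by
              rw [map_mul, coe_map_ps, hvp i hi]
          _ = 1 := by rw [hmulinv, map_one]
    have hder : (derivative (u i)).map ψ = (derivative (vp i)).map coeR := by
      rw [← Polynomial.derivative_map, ← Polynomial.derivative_map, hvp i hi]
    have hPPmap : ((PP i).map ψ : Polynomial ℚ_[p])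
        = Polynomial.C (ψ (c i)) * Polynomial.X * ((derivative (vp i)).map coeR) := by
      rw [hPP]
      simp only [Polynomial.map_mul, Polynomial.map_C, Polynomial.map_X]
      rw [hder]
    rw [map_mul, coe_map_ps, map_inv_ps ψ (u i) hui0, hPPmap, hgX]
    rw [map_mul, PowerSeries.map_C, map_mul, map_mul, PowerSeries.map_X, coe_map_ps, hinv,
      hchats i hi]
    push_cast [Polynomial.coe_mul, Polynomial.coe_C, Polynomial.coe_X]
    ring
  set aZ : ℕ → ℤ_[p] := fun N => (if N = 0 then chat0 else 0)
    + ∑ i ∈ s, chat i * PowerSeries.coeff N (gX i) with haZ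
  have hT2 : ∀ N : ℕ, ψ (PowerSeries.coeff N F) = coeR (aZ N) := by
    intro N
    have hmapF : PowerSeries.map ψ F
        = ((Polynomial.C (ψ c0) : Polynomial ℚ_[p]) : PowerSeries ℚ_[p])
          + ∑ i ∈ s, PowerSeries.map coeR (PowerSeries.C (chat i) * gX i) := by
      rw [hF, map_add, map_sum]
      congr 1
      · rw [coe_map_ps, Polynomial.map_C]
      · exact Finset.sum_congr rfl hterm2
    calc ψ (PowerSeries.coeff N F)
        = PowerSeries.coeff N (PowerSeries.map ψ F) := (PowerSeries.coeff_map ψ N F).symm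
      _ = PowerSeries.coeff N ((Polynomial.C (ψ c0) : Polynomial ℚ_[p]) : PowerSeries ℚ_[p])
          + ∑ i ∈ s, PowerSeries.coeff N
            (PowerSeries.map coeR (PowerSeries.C (chat i) * gX i)) := by
          rw [hmapF, map_add, map_sum]
      _ = coeR (aZ N) := by
          rw [haZ, map_add, map_sum]
          congr 1
          · rw [Polynomial.coeff_coe, Polynomial.coeff_C]
            split_ifs
            · rfl
            · rw [map_zero]
          · apply Finset.sum_congr rfl
            intro i hi
            rw [PowerSeries.coeff_map, PowerSeries.coeff_C_mul, map_mul]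
  -- norms of elements of ℤ_p under coeR
  have hcoenorm : ∀ z : ℤ_[p], ‖coeR z‖ ≤ 1 := fun z => z.2
  constructor
  · intro n hne
    rcases lt_or_ge n 0 with hn | hn
    · exact absurd (by rw [hTay n, if_pos hn]) hne
    · have h1 : taylorCoeff f n = PowerSeries.coeff n.natAbs F := by
        rw [hTay n, if_neg (not_lt.mpr hn)]
      have h3 : ‖ψ (taylorCoeff f n)‖ ≤ 1 := by
        rw [h1, hT2]; exact hcoenorm _
      have hψapp : ∀ q : ℚ, ψ q = (q : ℚ_[p]) := fun q => rfl
      rw [hψapp] at h3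
      have h4 := val_ge_of_norm_le (p := p) (taylorCoeff f n) hne 0 (by simpa using h3)
      exact h4
  · intro m r hm hr
    set N1 : ℕ := m * p ^ r with hN1
    set N2 : ℕ := m * p ^ (r - 1) with hN2
    have hN1pos : 0 < N1 := Nat.mul_pos (by omega) (Nat.pow_pos hprime.pos)
    have hN2pos : 0 < N2 := Nat.mul_pos (by omega) (Nat.pow_pos hprime.pos)
    have hidx1 : ((m : ℤ) * (p : ℤ) ^ r) = ((N1 : ℕ) : ℤ) := by rw [hN1]; push_cast; ring
    have hidx2 : ((m : ℤ) * (p : ℤ) ^ (r - 1)) = ((N2 : ℕ) : ℤ) := by rw [hN2]; push_cast; ring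
    have hTay1 : taylorCoeff f ((m : ℤ) * (p : ℤ) ^ r) = PowerSeries.coeff N1 F := by
      rw [hidx1, hTay, if_neg (by omega), Int.natAbs_natCast]
    have hTay2 : taylorCoeff f ((m : ℤ) * (p : ℤ) ^ (r - 1)) = PowerSeries.coeff N2 F := by
      rw [hidx2, hTay, if_neg (by omega), Int.natAbs_natCast]
    by_cases heq : taylorCoeff f ((m : ℤ) * (p : ℤ) ^ r)
        = taylorCoeff f ((m : ℤ) * (p : ℤ) ^ (r - 1))
    · exact Or.inl heq
    right
    -- difference of integer sides
    have hXc : ∀ (h : PowerSeries ℤ_[p]) (N : ℕ), 1 ≤ N →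
        PowerSeries.coeff N ((X : PowerSeries ℤ_[p]) * h)
          = PowerSeries.coeff (N - 1) h := by
      intro h N hN
      rw [show N = (N - 1) + 1 by omega, PowerSeries.coeff_succ_X_mul, Nat.add_sub_cancel]
    have hziex : ∀ i ∈ s, ∃ z : ℤ_[p],
        PowerSeries.coeff N1 (gX i) - PowerSeries.coeff N2 (gX i)
          = (p : ℤ_[p]) ^ r * z := by
      intro i hi
      obtain ⟨z, hz⟩ := gauss_core (vp i) (hvp0 i hi) m r hm hr
      refine ⟨z, ?_⟩
      rw [hgX, hXc _ N1 hN1pos, hXc _ N2 hN2pos]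
      exact hz
    choose zi hzi' using hziex
    have hsum : ∃ Z : ℤ_[p], aZ N1 - aZ N2 = (p : ℤ_[p]) ^ r * Z := by
      refine ⟨∑ i ∈ s.attach, chat i.1 * zi i.1 i.2, ?_⟩
      simp only [haZ]
      rw [if_neg (by omega : ¬ N1 = 0), if_neg (by omega : ¬ N2 = 0), zero_add, zero_add,
        ← Finset.sum_sub_distrib, Finset.mul_sum,
        ← Finset.sum_attach s fun i => chat i * PowerSeries.coeff N1 (gX i)
          - chat i * PowerSeries.coeff N2 (gX i)]
      apply Finset.sum_congr rfl
      intro i _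
      rw [← mul_sub, hzi' i.1 i.2]
      ring
    obtain ⟨Z, hZ⟩ := hsum
    have hdiffne : taylorCoeff f ((m : ℤ) * (p : ℤ) ^ r)
        - taylorCoeff f ((m : ℤ) * (p : ℤ) ^ (r - 1)) ≠ 0 := sub_ne_zero.mpr heq
    have hψd : ψ (taylorCoeff f ((m : ℤ) * (p : ℤ) ^ r)
        - taylorCoeff f ((m : ℤ) * (p : ℤ) ^ (r - 1)))
        = (p : ℚ_[p]) ^ r * coeR Z := by
      rw [map_sub, hTay1, hTay2, hT2, hT2, ← map_sub, hZ, map_mul, map_pow, map_natCast]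
    have hnd : ‖ψ (taylorCoeff f ((m : ℤ) * (p : ℤ) ^ r)
        - taylorCoeff f ((m : ℤ) * (p : ℤ) ^ (r - 1)))‖ ≤ (p : ℝ) ^ (-(r : ℤ)) := by
      rw [hψd, norm_mul]
      calc ‖(p : ℚ_[p]) ^ r‖ * ‖coeR Z‖ ≤ ‖(p : ℚ_[p]) ^ r‖ * 1 := by
            apply mul_le_mul_of_nonneg_left (hcoenorm Z) (norm_nonneg _)
        _ = (p : ℝ) ^ (-(r : ℤ)) := by rw [mul_one, Padic.norm_p_pow]
    have hψapp : ∀ q : ℚ, ψ q = (q : ℚ_[p]) := fun q => rfl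
    rw [hψapp] at hnd
    exact val_ge_of_norm_le _ hdiffne r hnd
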